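/- Let A ∈ ℝ^{n×n} be row-stochastic, c, p̄ ∈ ℝ^n nonnegative, and let p* = p*[A,c,p̄] be the unique minimizer over 𝒫_pr(c,p̄) = {p ∈ ℝ^n : 0 ≤ p ≤ p̄, p ≤ c + Aᵀp} of some (equivalently, any) decreasing function f : [0,p̄] → ℝ. Then every strongly connected sink component of the digraph G[A] contains at least one node i such that p*_i = p̄_i. -/

import Mathlib

open Matrix Finset

/-- The polytope `𝒫_pr(c, p̄)` of feasible payment vectors under the pro-rata rule:
`0 ≤ p ≤ p̄` and `p ≤ c + Aᵀp`. -/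
def FeasibleVec (n : ℕ) (A : Matrix (Fin n) (Fin n) ℝ) (c pbar p : Fin n → ℝ) : Prop :=
  (∀ i, 0 ≤ p i) ∧ (∀ i, p i ≤ pbar i) ∧ (∀ i, p i ≤ c i + Aᵀ.mulVec p i)

/-- A function `f : [0, p̄] → ℝ` is decreasing: `p ≤ q` with `p ≠ q` implies `f q < f p`. -/
def DecreasingOn (n : ℕ) (pbar : Fin n → ℝ) (f : (Fin n → ℝ) → ℝ) : Prop :=
  ∀ p q : Fin n → ℝ, (∀ i, 0 ≤ p i) → (∀ i, p i ≤ q i) → (∀ i, q i ≤ pbar i) →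
    p ≠ q → f q < f p

/-- Reachability in the weighted digraph `G[A]`, which has an arc `i → j` iff `A i j > 0`. -/
def Reach {n : ℕ} (A : Matrix (Fin n) (Fin n) ℝ) (i j : Fin n) : Prop :=
  Relation.ReflTransGen (fun a b => 0 < A a b) i j

/-- `V0` is a strongly connected component of `G[A]`: it is nonempty, all its nodes are
mutually reachable, and it is maximal with this property. -/
def IsSCC {n : ℕ} (A : Matrix (Fin n) (Fin n) ℝ) (V0 : Set (Fin n)) : Prop :=
  V0.Nonempty ∧ (∀ i ∈ V0, ∀ j ∈ V0, Reach A i j) ∧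
  (∀ i ∈ V0, ∀ j, Reach A i j → Reach A j i → j ∈ V0)

/-- `V0` is a sink in `G[A]`: no arc leaves it. -/
def IsSink {n : ℕ} (A : Matrix (Fin n) (Fin n) ℝ) (V0 : Set (Fin n)) : Prop :=
  ∀ i ∈ V0, ∀ j, 0 < A i j → j ∈ V0

/-- Every strongly connected sink component of `G[A]` contains at least one node `i`
where the minimizer `p*` pays in full: `p* i = p̄ i`. -/
theorem prorata_min_sink_full_payment (n : ℕ) (hn : 1 ≤ n)
    (A : Matrix (Fin n) (Fin n) ℝ) (hA0 : ∀ i j, 0 ≤ A i j) (hA1 : ∀ i, ∑ j, A i j = 1)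
    (c pbar : Fin n → ℝ) (hc : ∀ i, 0 ≤ c i) (hpbar : ∀ i, 0 ≤ pbar i)
    (f : (Fin n → ℝ) → ℝ) (hf : DecreasingOn n pbar f)
    (pstar : Fin n → ℝ) (hfeas : FeasibleVec n A c pbar pstar)
    (hmin : ∀ q, FeasibleVec n A c pbar q → f pstar ≤ f q) :
    ∀ V0 : Set (Fin n), IsSCC A V0 → IsSink A V0 → ∃ i ∈ V0, pstar i = pbar i := by
  classical
  intro V0 hSCC hSink
  by_contra hcon
  push_neg at hcon
  obtain ⟨hpos, hle, hbal⟩ := hfeas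
  have hlt : ∀ i ∈ V0, pstar i < pbar i := fun i hi => (hle i).lt_of_ne (hcon i hi)
  have hAzero : ∀ i ∈ V0, ∀ j, j ∉ V0 → A i j = 0 := by
    intro i hi j hj
    by_contra h
    exact hj (hSink i hi j ((hA0 i j).lt_of_ne (Ne.symm h)))
  set M : Matrix (Fin n) (Fin n) ℝ :=
    Matrix.of (fun i j => if i ∈ V0 ∧ j ∈ V0 then A i j else 0) with hM
  set u : Fin n → ℝ := fun i => if i ∈ V0 then 1 else 0 with hu
  obtain ⟨i0, hi0⟩ := hSCC.1
  have hune : u ≠ 0 := by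
    intro h
    have := congrFun h i0
    simp [hu, hi0] at this
  have hMu : (M - 1).mulVec u = 0 := by
    funext i
    simp only [Matrix.sub_mulVec, Matrix.one_mulVec, Pi.sub_apply, Pi.zero_apply]
    by_cases hi : i ∈ V0
    · have h1 : M.mulVec u i = 1 := by
        simp only [Matrix.mulVec, dotProduct]
        rw [← hA1 i]
        apply Finset.sum_congr rfl
        intro j _
        by_cases hj : j ∈ V0
        · simp [hM, hu, hi, hj]
        · simp [hM, hu, hi, hj, hAzero i hi j hj]
      rw [h1]; simp [hu, hi]
    · have h1 : M.mulVec u i = 0 := by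
        simp only [Matrix.mulVec, dotProduct]
        apply Finset.sum_eq_zero
        intro j _
        simp [hM, hi]
      rw [h1]; simp [hu, hi]
  have hdet : (M - 1).det = 0 := by
    rw [← Matrix.exists_mulVec_eq_zero_iff]
    exact ⟨u, hune, hMu⟩
  have hdetT : ((M - 1)ᵀ).det = 0 := by rw [Matrix.det_transpose]; exact hdet
  obtain ⟨v, hvne, hvT⟩ := (Matrix.exists_mulVec_eq_zero_iff).2 hdetT
  have hMv : Mᵀ.mulVec v = v := by
    rw [Matrix.transpose_sub, Matrix.transpose_one, Matrix.sub_mulVec, Matrix.one_mulVec,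
      sub_eq_zero] at hvT
    exact hvT
  set d : Fin n → ℝ := fun i => |v i| with hd
  have hd0 : ∀ i, 0 ≤ d i := fun i => abs_nonneg _
  have hvout : ∀ i, i ∉ V0 → v i = 0 := by
    intro i hi
    rw [← congrFun hMv i]
    simp only [Matrix.mulVec, dotProduct, Matrix.transpose_apply]
    apply Finset.sum_eq_zero
    intro j _
    simp [hM, hi]
  have hdout : ∀ i, i ∉ V0 → d i = 0 := fun i hi => by simp [hd, hvout i hi]
  have hMle : ∀ i j, M i j ≤ A i j := by
    intro i j
    by_cases h : i ∈ V0 ∧ j ∈ V0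
    · simp [hM, h]
    · simp [hM, h, hA0 i j]
  have hM0 : ∀ i j, 0 ≤ M i j := by
    intro i j
    by_cases h : i ∈ V0 ∧ j ∈ V0
    · simp [hM, h, hA0 i j]
    · simp [hM, h]
  have hkey : ∀ i, d i ≤ ∑ j, A j i * d j := by
    intro i
    have h2 : v i = ∑ j, M j i * v j := by
      conv_lhs => rw [← congrFun hMv i]
      simp [Matrix.mulVec, dotProduct, Matrix.transpose_apply]
    have h1 : d i = |∑ j, M j i * v j| := by
      simp only [hd]
      rw [← h2]
    rw [h1]
    calc |∑ j, M j i * v j| ≤ ∑ j, |M j i * v j| := Finset.abs_sum_le_sum_abs _ _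
      _ = ∑ j, M j i * d j := by
          apply Finset.sum_congr rfl
          intro j _
          rw [abs_mul, abs_of_nonneg (hM0 j i), hd]
      _ ≤ ∑ j, A j i * d j := by
          apply Finset.sum_le_sum
          intro j _
          exact mul_le_mul_of_nonneg_right (hMle j i) (hd0 j)
  -- choose epsilon
  have hV0fin : V0.toFinset.Nonempty := by
    rw [Set.toFinset_nonempty]; exact ⟨i0, hi0⟩
  set g : Fin n → ℝ := fun i => (pbar i - pstar i) / (d i + 1) with hg
  set T := V0.toFinset.image g with hT
  have hTne : T.Nonempty := hV0fin.image g
  set ε : ℝ := T.min' hTne with hε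
  have hgpos : ∀ i ∈ V0, 0 < g i := by
    intro i hi
    apply div_pos (by linarith [hlt i hi])
    linarith [hd0 i]
  have hεpos : 0 < ε := by
    obtain ⟨i, hiT, hieq⟩ := Finset.mem_image.1 (T.min'_mem hTne)
    rw [hε, ← hieq]
    exact hgpos i (Set.mem_toFinset.1 hiT)
  have hεle : ∀ i ∈ V0, ε ≤ g i := by
    intro i hi
    exact T.min'_le _ (Finset.mem_image_of_mem g (Set.mem_toFinset.2 hi))
  have hεd : ∀ i ∈ V0, ε * d i ≤ pbar i - pstar i := by
    intro i hi
    have hdp : (0:ℝ) < d i + 1 := by linarith [hd0 i]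
    have h1 : ε * (d i + 1) ≤ g i * (d i + 1) :=
      mul_le_mul_of_nonneg_right (hεle i hi) (le_of_lt hdp)
    have h2 : g i * (d i + 1) = pbar i - pstar i := by
      rw [hg]; field_simp
    nlinarith [hd0 i]
  set q : Fin n → ℝ := fun i => pstar i + ε * d i with hq
  have hsum : ∀ i, Aᵀ.mulVec q i = Aᵀ.mulVec pstar i + ε * ∑ j, A j i * d j := by
    intro i
    simp only [Matrix.mulVec, dotProduct, Matrix.transpose_apply, hq,
      Finset.mul_sum]
    rw [← Finset.sum_add_distrib]
    apply Finset.sum_congr rfl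
    intro j _
    ring
  have hqfeas : FeasibleVec n A c pbar q := by
    refine ⟨?_, ?_, ?_⟩
    · intro i
      have := mul_nonneg (le_of_lt hεpos) (hd0 i)
      simp only [hq]
      linarith [hpos i]
    · intro i
      by_cases hi : i ∈ V0
      · have := hεd i hi
        simp only [hq]; linarith
      · simp only [hq, hdout i hi]
        simpa using hle i
    · intro i
      rw [hsum i]
      have hs0 : 0 ≤ ∑ j, A j i * d j :=
        Finset.sum_nonneg fun j _ => mul_nonneg (hA0 j i) (hd0 j)
      by_cases hi : i ∈ V0
      · have h1 := hbal i
        have h2 := mul_le_mul_of_nonneg_left (hkey i) (le_of_lt hεpos)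
        simp only [hq]
        linarith
      · simp only [hq, hdout i hi]
        have := hbal i
        have : pstar i ≤ c i + Aᵀ.mulVec pstar i := hbal i
        nlinarith [mul_nonneg (le_of_lt hεpos) hs0]
  have hne : pstar ≠ q := by
    obtain ⟨i, hvi⟩ := Function.ne_iff.1 hvne
    simp only [Pi.zero_apply] at hvi
    have hdi : 0 < d i := by rw [hd]; exact abs_pos.2 hvi
    intro h
    have := congrFun h i
    simp only [hq] at this
    nlinarith
  have hlt2 : f q < f pstar := by
    apply hf pstar q hpos
    · intro i
      simp only [hq]
      nlinarith [mul_nonneg (le_of_lt hεpos) (hd0 i)]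
    · exact hqfeas.2.1
    · exact hne
  exact absurd (hmin q hqfeas) (not_le.2 hlt2)
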